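/- Let (X,d) be a compact metric space and f : X → X an equicontinuous homeomorphism. Then the following are equivalent: (1) (X,f) is topologically transitive; (2) (X,f) is minimal; (3) (X,f) has the gluing orbit property. -/

import Mathlib

open Filter Set Metric

namespace Paper

variable {X : Type*}

/-- Integer iteration of a homeomorphism: `f^n` for `n : ℤ`. -/
def zIter [TopologicalSpace X] (f : X ≃ₜ X) (n : ℤ) (x : X) : X :=
  if 0 ≤ n then (⇑f)^[n.toNat] x else (⇑f.symm)^[(-n).toNat] x

/-- `(X,f)` is minimal: every (two-sided) orbit is dense. -/
def Minimal [TopologicalSpace X] (f : X ≃ₜ X) : Prop :=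
  ∀ x : X, Dense (Set.range fun n : ℤ => zIter f n x)

/-- Topological transitivity. -/
def TopTransitive [TopologicalSpace X] (f : X ≃ₜ X) : Prop :=
  ∀ U V : Set X, IsOpen U → IsOpen V → U.Nonempty → V.Nonempty →
    ∃ n : ℤ, (U ∩ (zIter f n) ⁻¹' V).Nonempty

/-- Equicontinuity of the family of forward iterates. -/
def EquicontinuousSystem [MetricSpace X] (f : X → X) : Prop :=
  ∀ ε : ℝ, 0 < ε → ∃ δ : ℝ, 0 < δ ∧
    ∀ x y : X, dist x y < δ → ∀ n : ℕ, dist (f^[n] x) (f^[n] y) < ε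

/-- The transition times `s_j` (0-indexed: `s 0 = 0`,
`s (j+1) = s j + m_j + t_j - 1`) for an orbit sequence `C` (with lengths `m_j = (C j).2`)
and a gap `g`. -/
def sTimes (C : ℕ → X × ℕ) (g : ℕ → ℕ) : ℕ → ℕ
  | 0 => 0
  | j + 1 => sTimes C g j + (C j).2 + g j - 1

/-- `(C, g)` (an orbit sequence of rank `k` together with a gap) is `ε`-shadowed by `z`. -/
def Shadows [MetricSpace X] (f : X → X) (k : ℕ) (C : ℕ → X × ℕ) (g : ℕ → ℕ)
    (ε : ℝ) (z : X) : Prop :=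
  ∀ j < k, ∀ l < (C j).2, dist (f^[sTimes C g j + l] z) (f^[l] (C j).1) < ε

/-- The gluing orbit property. -/
def GluingOrbit [MetricSpace X] (f : X → X) : Prop :=
  ∀ ε : ℝ, 0 < ε → ∃ M : ℕ, 0 < M ∧
    ∀ k : ℕ, 0 < k → ∀ C : ℕ → X × ℕ, (∀ j < k, 0 < (C j).2) →
      ∃ g : ℕ → ℕ, (∀ j < k - 1, 0 < g j ∧ g j ≤ M) ∧
        ∃ z : X, Shadows f k C g ε z

/-- The specification property, at scale `ε` with constant `M`. -/
def SpecWith [MetricSpace X] (f : X → X) (ε : ℝ) (M : ℕ) : Prop :=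
  ∀ k : ℕ, 0 < k → ∀ C : ℕ → X × ℕ, (∀ j < k, 0 < (C j).2) →
    ∀ g : ℕ → ℕ, (∀ j < k - 1, M ≤ g j) →
      ∃ z : X, Shadows f k C g ε z

/-- The specification property. -/
def Specification [MetricSpace X] (f : X → X) : Prop :=
  ∀ ε : ℝ, 0 < ε → ∃ M : ℕ, 0 < M ∧ SpecWith f ε M

/-- The periodic gluing orbit property. -/
def PerGluingOrbit [MetricSpace X] (f : X → X) : Prop :=
  ∀ ε : ℝ, 0 < ε → ∃ M : ℕ, 0 < M ∧
    ∀ k : ℕ, 0 < k → ∀ C : ℕ → X × ℕ, (∀ j < k, 0 < (C j).2) →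
      ∃ t : ℕ, 0 < t ∧ t ≤ M ∧
        ∃ g : ℕ → ℕ, (∀ j < k - 1, 0 < g j ∧ g j ≤ M) ∧
          ∃ z : X, Shadows f k C g ε z ∧
            f^[sTimes C g (k - 1) + (C (k - 1)).2 + t] z = z

/-- `E` is an `(n,ε)`-separated set. -/
def IsSepSet [MetricSpace X] (f : X → X) (n : ℕ) (ε : ℝ) (E : Set X) : Prop :=
  ∀ x ∈ E, ∀ y ∈ E, x ≠ y → ∃ k < n, ε < dist (f^[k] x) (f^[k] y)

/-- `s(n,ε)`: the maximal cardinality of an `(n,ε)`-separated subset of `X`. -/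
noncomputable def sepNum [MetricSpace X] (f : X → X) (n : ℕ) (ε : ℝ) : ℕ :=
  sSup {N : ℕ | ∃ E : Finset X, IsSepSet f n ε ↑E ∧ E.card = N}

/-- Topological entropy `h(f) = lim_{ε → 0⁺} limsup_n (ln s(n,ε))/n`; since the inner
quantity is monotone as `ε` decreases, the limit equals the supremum over `ε > 0`. -/
noncomputable def topEnt [MetricSpace X] (f : X → X) : EReal :=
  ⨆ (ε : ℝ) (_ : 0 < ε),
    Filter.limsup (fun n : ℕ => ((Real.log (sepNum f n ε) / n : ℝ) : EReal)) Filter.atTop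

/-- The set of periodic points of period at most `n`. -/
def perPts (f : X → X) (n : ℕ) : Set X :=
  {x | ∃ m : ℕ, 0 < m ∧ m ≤ n ∧ f^[m] x = x}

open Classical in
/-- `p(f) = limsup_n (ln p_n(f))/n`, the exponential growth rate of periodic points
(`⊤` contributions when there are infinitely many such points). -/
noncomputable def perGrowth (f : X → X) : EReal :=
  Filter.limsup (fun n : ℕ =>
      if h : (perPts f n).Finite then ((Real.log (perPts f n).ncard / n : ℝ) : EReal) else ⊤)
    Filter.atTop

/-- The lower box dimension of `X`, `liminf_{ε→0⁺} ln s(1,ε) / (-ln ε)`. -/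
noncomputable def lowerBoxDim [MetricSpace X] (f : X → X) : EReal :=
  Filter.liminf (fun ε : ℝ => ((Real.log (sepNum f 1 ε) / (-Real.log ε) : ℝ) : EReal))
    (nhdsWithin 0 (Set.Ioi 0))



































/-! Semiflow case -/

/-- `φ` is a continuous semiflow on `X` (for nonnegative times). -/
def IsSemiflow [TopologicalSpace X] (φ : ℝ → X → X) : Prop :=
  (∀ x : X, φ 0 x = x) ∧
    (∀ s t : ℝ, 0 ≤ s → 0 ≤ t → ∀ x : X, φ (s + t) x = φ s (φ t x)) ∧
      Continuous fun p : ℝ × X => φ p.1 p.2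

/-- Minimality of a semiflow: every forward orbit is dense. -/
def MinimalFlow [TopologicalSpace X] (φ : ℝ → X → X) : Prop :=
  ∀ x : X, Dense {y : X | ∃ t : ℝ, 0 ≤ t ∧ φ t x = y}

/-- Transition times for the semiflow gluing: `s 0 = 0`, `s (j+1) = s j + m_j + t_j`. -/
def sFlow (C : ℕ → X × ℝ) (g : ℕ → ℝ) : ℕ → ℝ
  | 0 => 0
  | j + 1 => sFlow C g j + (C j).2 + g j

/-- Gluing orbit property for a semiflow. -/
def GluingFlow [MetricSpace X] (φ : ℝ → X → X) : Prop :=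
  ∀ ε : ℝ, 0 < ε → ∃ M : ℝ, 0 < M ∧
    ∀ k : ℕ, 0 < k → ∀ C : ℕ → X × ℝ, (∀ j < k, 0 ≤ (C j).2) →
      ∃ g : ℕ → ℝ, (∀ j < k - 1, 0 ≤ g j ∧ g j ≤ M) ∧
        ∃ z : X, ∀ j < k, ∀ t ∈ Set.Icc (0 : ℝ) (C j).2,
          dist (φ (sFlow C g j + t) z) (φ t (C j).1) < ε

/-- `E` is a `(T,ε)`-separated set for the semiflow `φ`. -/
def IsSepFlow [MetricSpace X] (φ : ℝ → X → X) (T ε : ℝ) (E : Set X) : Prop :=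
  ∀ x ∈ E, ∀ y ∈ E, x ≠ y → ∃ t ∈ Set.Icc (0 : ℝ) T, ε < dist (φ t x) (φ t y)

/-- `s(T,ε)` for the semiflow. -/
noncomputable def sepFlow [MetricSpace X] (φ : ℝ → X → X) (T ε : ℝ) : ℕ :=
  sSup {N : ℕ | ∃ E : Finset X, IsSepFlow φ T ε ↑E ∧ E.card = N}

/-- Topological entropy of a semiflow. -/
noncomputable def topEntFlow [MetricSpace X] (φ : ℝ → X → X) : EReal :=
  ⨆ (ε : ℝ) (_ : 0 < ε),
    Filter.limsup (fun T : ℝ => ((Real.log (sepFlow φ T ε) / T : ℝ) : EReal)) Filter.atTop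

/-- zIter at a nonnegative integer is forward iteration. -/
lemma zIter_natCast [TopologicalSpace X] (f : X ≃ₜ X) (m : ℕ) (x : X) :
    zIter f (m : ℤ) x = (⇑f)^[m] x := by
  simp [zIter]

/-- Uniform recurrence for equicontinuous systems: for every `ε > 0` and any `L`,
there is `N ≥ L` with `d(f^N y, y) < ε` for every `y`. -/
lemma recurN [MetricSpace X] [CompactSpace X] (f : X ≃ₜ X)
    (heq : EquicontinuousSystem (⇑f)) {ε : ℝ} (hε : 0 < ε) (L : ℕ) :
    ∃ N, L ≤ N ∧ ∀ y : X, dist ((⇑f)^[N] y) y < ε := by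
  obtain ⟨δ, hδ, hδε⟩ := heq (ε / 3) (by linarith)
  have htb : TotallyBounded (univ : Set X) := isCompact_univ.totallyBounded
  obtain ⟨t, htfin, htcov⟩ := totallyBounded_iff.1 htb δ hδ
  haveI : Fintype ↥t := htfin.fintype
  set Φ : ℕ → (↥t → X) := fun n i => (⇑f)^[n] ↑i with hΦ
  obtain ⟨a, -, φ, hmono, hconv⟩ :=
    isCompact_univ.tendsto_subseq (x := Φ) (fun n => mem_univ _)
  rw [Metric.tendsto_atTop] at hconv
  obtain ⟨n0, hn0⟩ := hconv (ε / 6) (by linarith)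
  have key : ∀ a b : ℕ, φ a + b ≤ φ (a + b) := by
    intro a b
    induction b with
    | zero => simp
    | succ b ih =>
      have := hmono (show a + b < a + (b + 1) by omega)
      omega
  set m1 := φ n0 with hm1
  set m2 := φ (n0 + L) with hm2
  have hm12 : m1 + L ≤ m2 := key n0 L
  refine ⟨m2 - m1, by omega, fun y => ?_⟩
  set x := (⇑f.symm)^[m1] y with hx
  have hfx : (⇑f)^[m1] x = y := by
    have : Function.LeftInverse (⇑f) (⇑f.symm) := fun z => f.apply_symm_apply z
    exact this.iterate m1 y
  obtain ⟨i, hit', hxi⟩ := mem_iUnion₂.1 (htcov (mem_univ x))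
  have hxi : dist x i < δ := mem_ball.1 hxi
  have hΦd : dist (Φ m2) (Φ m1) < ε / 3 := by
    calc dist (Φ m2) (Φ m1) ≤ dist (Φ m2) a + dist a (Φ m1) := dist_triangle _ _ _
      _ < ε / 6 + ε / 6 := by
          have h1 := hn0 (n0 + L) (Nat.le_add_right _ _)
          have h2 := hn0 n0 le_rfl
          rw [dist_comm a (Φ m1)]
          exact add_lt_add h1 h2
      _ = ε / 3 := by ring
  have hcoord : dist ((⇑f)^[m2] i) ((⇑f)^[m1] i) < ε / 3 := by
    have := dist_le_pi_dist (Φ m2) (Φ m1) ⟨i, hit'⟩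
    exact lt_of_le_of_lt this hΦd
  have e1 : dist ((⇑f)^[m2] x) ((⇑f)^[m2] i) < ε / 3 := hδε x i hxi m2
  have e3 : dist ((⇑f)^[m1] i) ((⇑f)^[m1] x) < ε / 3 := by
    rw [dist_comm]; exact hδε x i hxi m1
  have hiter : (⇑f)^[m2 - m1] y = (⇑f)^[m2] x := by
    rw [← hfx, ← Function.iterate_add_apply]
    congr 1
    omega
  calc dist ((⇑f)^[m2 - m1] y) y
      = dist ((⇑f)^[m2] x) ((⇑f)^[m1] x) := by rw [hiter, hfx]
    _ ≤ dist ((⇑f)^[m2] x) ((⇑f)^[m2] i) + dist ((⇑f)^[m2] i) ((⇑f)^[m1] i)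
        + dist ((⇑f)^[m1] i) ((⇑f)^[m1] x) := dist_triangle4 _ _ _ _
    _ < ε / 3 + ε / 3 + ε / 3 := by linarith
    _ = ε := by ring

/-- Topological transitivity implies every forward orbit is dense,
for an equicontinuous homeomorphism of a compact metric space. -/
lemma forwardDense [MetricSpace X] [CompactSpace X] (f : X ≃ₜ X)
    (heq : EquicontinuousSystem (⇑f)) (ht : TopTransitive f) :
    ∀ x : X, Dense (Set.range fun m : ℕ => (⇑f)^[m] x) := by
  intro x
  rw [Metric.dense_iff]
  intro y r hr
  obtain ⟨δ, hδ, hδε⟩ := heq (r / 3) (by linarith)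
  obtain ⟨n, z, hzU, hzV⟩ := ht (ball y (r / 3)) (ball x δ) isOpen_ball isOpen_ball
    ⟨y, mem_ball_self (by linarith)⟩ ⟨x, mem_ball_self hδ⟩
  have hzy : dist z y < r / 3 := mem_ball.1 hzU
  rcases le_or_gt 0 n with hn | hn
  · -- forward case
    set n' := n.toNat with hn'
    have hzit : zIter f n z = (⇑f)^[n'] z := by rw [zIter, if_pos hn]
    have hw : dist ((⇑f)^[n'] z) x < δ := by
      have := mem_ball.1 (mem_preimage.1 hzV); rwa [hzit] at this
    obtain ⟨N, hN, hrec⟩ := recurN f heq (show (0:ℝ) < r / 3 by linarith) n'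
    set m := N - n' with hm
    refine ⟨(⇑f)^[m] x, ?_, ⟨m, rfl⟩⟩
    rw [mem_ball]
    have e1 : dist ((⇑f)^[m] x) ((⇑f)^[m] ((⇑f)^[n'] z)) < r / 3 := by
      apply hδε
      rwa [dist_comm]
    have e2 : (⇑f)^[m] ((⇑f)^[n'] z) = (⇑f)^[N] z := by
      rw [← Function.iterate_add_apply]
      congr 1
      omega
    have e3 : dist ((⇑f)^[N] z) z < r / 3 := hrec z
    rw [e2] at e1
    calc dist ((⇑f)^[m] x) y
        ≤ dist ((⇑f)^[m] x) ((⇑f)^[N] z) + dist ((⇑f)^[N] z) z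
          + dist z y := dist_triangle4 _ _ _ _
      _ < r / 3 + r / 3 + r / 3 := add_lt_add (add_lt_add e1 e3) hzy
      _ = r := by ring
  · -- backward case
    set a := (-n).toNat with ha
    set w := (⇑f.symm)^[a] z with hwdef
    have hzit : zIter f n z = w := by rw [zIter, if_neg (not_le.2 hn)]
    have hw : dist w x < δ := by
      have := mem_ball.1 (mem_preimage.1 hzV); rwa [hzit] at this
    have hfw : (⇑f)^[a] w = z := by
      have : Function.LeftInverse (⇑f) (⇑f.symm) := fun u => f.apply_symm_apply u
      exact this.iterate a z
    refine ⟨(⇑f)^[a] x, ?_, ⟨a, rfl⟩⟩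
    rw [mem_ball]
    have e1 : dist ((⇑f)^[a] x) ((⇑f)^[a] w) < r / 3 := by
      apply hδε
      rwa [dist_comm]
    calc dist ((⇑f)^[a] x) y
        ≤ dist ((⇑f)^[a] x) ((⇑f)^[a] w) + dist ((⇑f)^[a] w) y := dist_triangle _ _ _
      _ = dist ((⇑f)^[a] x) ((⇑f)^[a] w) + dist z y := by rw [hfw]
      _ < r / 3 + r / 3 := add_lt_add e1 hzy
      _ < r := by linarith

/-- Dense forward orbits imply minimality. -/
lemma forwardDense_minimal [MetricSpace X] (f : X ≃ₜ X)
    (hd : ∀ x : X, Dense (Set.range fun m : ℕ => (⇑f)^[m] x)) : Minimal f := by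
  intro x
  refine Dense.mono ?_ (hd x)
  rintro p ⟨m, rfl⟩
  exact ⟨(m : ℤ), zIter_natCast f m x⟩

/-- Minimality implies topological transitivity. -/
lemma minimal_topTransitive [TopologicalSpace X] (f : X ≃ₜ X)
    (hmin : Minimal f) : TopTransitive f := by
  intro U V hU hV hUne hVne
  obtain ⟨x, hx⟩ := hUne
  obtain ⟨p, ⟨n, rfl⟩, hp⟩ := (hmin x).exists_mem_open hV hVne
  exact ⟨n, x, hx, hp⟩

/-- Gluing orbit implies topological transitivity. -/
lemma gluing_topTransitive [MetricSpace X] (f : X ≃ₜ X)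
    (hg : GluingOrbit (⇑f)) : TopTransitive f := by
  intro U V hU hV hUne hVne
  obtain ⟨u, hu⟩ := hUne
  obtain ⟨v, hv⟩ := hVne
  obtain ⟨εu, hεu, hbu⟩ := Metric.isOpen_iff.1 hU u hu
  obtain ⟨εv, hεv, hbv⟩ := Metric.isOpen_iff.1 hV v hv
  set ε := min εu εv with hε
  have hεpos : 0 < ε := lt_min hεu hεv
  obtain ⟨M, hM, h⟩ := hg ε hεpos
  set C : ℕ → X × ℕ := fun j => if j = 0 then (u, 1) else (v, 1) with hC
  obtain ⟨g, hgbd, z, hz⟩ := h 2 (by norm_num) C (by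
    intro j hj
    by_cases hj0 : j = 0 <;> simp [hC, hj0])
  have h0 : dist z u < ε := by
    have := hz 0 (by norm_num) 0 (by simp [hC])
    simpa [sTimes, hC] using this
  have hs1 : sTimes C g 1 = g 0 := by
    simp [sTimes, hC]
  have h1 : dist ((⇑f)^[g 0] z) v < ε := by
    have := hz 1 (by norm_num) 0 (by simp [hC])
    rw [hs1] at this
    simpa [hC] using this
  refine ⟨(g 0 : ℤ), z, ?_, ?_⟩
  · exact hbu (mem_ball.2 (lt_of_lt_of_le h0 (min_le_left _ _)))
  · rw [mem_preimage, zIter_natCast]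
    exact hbv (mem_ball.2 (lt_of_lt_of_le h1 (min_le_right _ _)))

/-- Uniform hitting-time ("minimality is uniform") lemma. -/
lemma hitting [MetricSpace X] [CompactSpace X] (f : X ≃ₜ X)
    (hd : ∀ x : X, Dense (Set.range fun m : ℕ => (⇑f)^[m] x))
    {δ : ℝ} (hδ : 0 < δ) :
    ∃ M : ℕ, 1 ≤ M ∧ ∀ v y : X, ∃ t, 1 ≤ t ∧ t ≤ M ∧ dist ((⇑f)^[t] v) y < δ := by
  have htb : TotallyBounded (univ : Set X) := isCompact_univ.totallyBounded
  obtain ⟨t, htfin, htcov⟩ := totallyBounded_iff.1 htb (δ / 2) (by linarith)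
  have hbd : ∀ i : X, ∃ Mi : ℕ, i ∈ t → ∀ v : X, ∃ m ≤ Mi, dist ((⇑f)^[m] v) i < δ / 2 := by
    intro i
    by_cases hi : i ∈ t
    · have hcov : (univ : Set X) ⊆ ⋃ m : ℕ, (⇑f)^[m] ⁻¹' (ball i (δ / 2)) := by
        intro v _
        obtain ⟨p, hpball, m, rfl⟩ := Metric.dense_iff.1 (hd v) i (δ / 2) (by linarith)
        exact mem_iUnion.2 ⟨m, by simpa [dist_comm] using mem_ball.1 hpball⟩
      obtain ⟨s, hs⟩ := isCompact_univ.elim_finite_subcover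
        (fun m : ℕ => (⇑f)^[m] ⁻¹' (ball i (δ / 2)))
        (fun m => (isOpen_ball).preimage (f.continuous.iterate m)) hcov
      refine ⟨s.sup id, fun _ v => ?_⟩
      obtain ⟨m, hms, hmv⟩ := mem_iUnion₂.1 (hs (mem_univ v))
      exact ⟨m, Finset.le_sup (f := id) hms, by simpa [dist_comm] using mem_ball.1 hmv⟩
    · exact ⟨0, fun h => absurd h hi⟩
  choose Mi hMi using hbd
  refine ⟨htfin.toFinset.sup Mi + 1, by omega, fun v y => ?_⟩
  obtain ⟨i, hit', hyi⟩ := mem_iUnion₂.1 (htcov (mem_univ y))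
  obtain ⟨m, hm, hmd⟩ := hMi i hit' (f v)
  refine ⟨m + 1, by omega, ?_, ?_⟩
  · have : Mi i ≤ htfin.toFinset.sup Mi :=
      Finset.le_sup (htfin.mem_toFinset.2 hit')
    omega
  · rw [Function.iterate_succ_apply]
    calc dist ((⇑f)^[m] (f v)) y ≤ dist ((⇑f)^[m] (f v)) i + dist i y := dist_triangle _ _ _
      _ < δ / 2 + δ / 2 := add_lt_add hmd (by rw [dist_comm]; exact mem_ball.1 hyi)
      _ = δ := by ring

/-- Auxiliary recursion for building transition times. -/
def glueS (F : ℕ → ℕ → ℕ) : ℕ → ℕ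
  | 0 => 0
  | j + 1 => glueS F j + F j (glueS F j)

/-- Dense forward orbits plus equicontinuity imply the gluing orbit property. -/
lemma forwardDense_gluing [MetricSpace X] [CompactSpace X] (f : X ≃ₜ X)
    (heq : EquicontinuousSystem (⇑f))
    (hd : ∀ x : X, Dense (Set.range fun m : ℕ => (⇑f)^[m] x)) :
    GluingOrbit (⇑f) := by
  intro ε hε
  obtain ⟨δ, hδ, hδε⟩ := heq ε hε
  obtain ⟨M, hM1, hhit⟩ := hitting f hd hδ
  choose tf h1 h2 h3 using hhit
  refine ⟨M, hM1, fun k hk C hC => ?_⟩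
  set z := (C 0).1 with hz
  set T : ℕ → ℕ → ℕ := fun j s => tf ((⇑f)^[s + (C j).2 - 1] z) ((C (j + 1)).1) with hT
  set s' : ℕ → ℕ := glueS (fun j s => (C j).2 + T j s - 1) with hs'
  set g : ℕ → ℕ := fun j => T j (s' j) with hg
  have hT1 : ∀ j s, 1 ≤ T j s := fun j s => h1 _ _
  have hsg : ∀ j, sTimes C g j = s' j := by
    intro j
    induction j with
    | zero => rfl
    | succ j ih =>
      have ht1 := hT1 j (s' j)
      have hgj : g j = T j (s' j) := rfl
      have hstep : s' (j + 1) = s' j + ((C j).2 + T j (s' j) - 1) := rfl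
      simp only [sTimes]
      rw [ih, hgj, hstep]
      omega
  have hinv : ∀ j < k, dist ((⇑f)^[s' j] z) ((C j).1) < δ := by
    intro j hj
    cases j with
    | zero =>
      rw [show s' 0 = 0 from rfl]
      simpa [hz] using hδ
    | succ j =>
      have hm := hC j (by omega)
      have ht1 := hT1 j (s' j)
      have hstep : s' (j + 1) = T j (s' j) + (s' j + (C j).2 - 1) := by
        show s' j + ((C j).2 + T j (s' j) - 1) = _
        omega
      rw [hstep, Function.iterate_add_apply]
      exact h3 ((⇑f)^[s' j + (C j).2 - 1] z) ((C (j + 1)).1)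
  refine ⟨g, fun j _ => ⟨hT1 j (s' j), h2 _ _⟩, z, ?_⟩
  intro j hj l hl
  rw [hsg, add_comm, Function.iterate_add_apply]
  exact hδε _ _ (hinv j hj) l

theorem stmt2 [MetricSpace X] [CompactSpace X] (f : X ≃ₜ X)
    (heq : EquicontinuousSystem (⇑f)) :
    (TopTransitive f ↔ Minimal f) ∧ (Minimal f ↔ GluingOrbit (⇑f)) := by
  refine ⟨⟨fun ht => forwardDense_minimal f (forwardDense f heq ht),
    minimal_topTransitive f⟩, ?_, ?_⟩
  · intro hmin
    exact forwardDense_gluing f heq (forwardDense f heq (minimal_topTransitive f hmin))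
  · intro hglue
    exact forwardDense_minimal f (forwardDense f heq (gluing_topTransitive f hglue))

end Paper
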